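/- Every linear operator Q on F[x] that lowers the degree of each polynomial by exactly one is of the form Qxⁿ = Σ_{k=1}^n b_{n,k} x^{n−k} with b_{n,1} ≠ 0; normalizing b_{1,1} = 1, there exist a (unique) admissible sequence ψ and (unique) scalars q_k, k ≥ 2, with Q = ∂_ψ + Σ_{k≥2} q_k ∂_ψ^k if and only if b_{n,k} = (n choose k)_ψ · b_{k,k} for all n ≥ k ≥ 1, where (n choose k)_ψ = n_ψ(n−1)_ψ⋯(n−k+1)_ψ / k_ψ!. -/

import Mathlib

open Polynomial

private lemma sum_mono_inj {F : Type*} [Field F] (n : ℕ) (c d : ℕ → F)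
    (h : ∑ k ∈ Finset.Icc 1 n, c k • (X : F[X]) ^ (n - k) =
         ∑ k ∈ Finset.Icc 1 n, d k • (X : F[X]) ^ (n - k)) :
    ∀ k ∈ Finset.Icc 1 n, c k = d k := by
  intro k hk
  simp only [Finset.mem_Icc] at hk
  have hc := congrArg (fun p => Polynomial.coeff p (n - k)) h
  simp only [Polynomial.finset_sum_coeff, Polynomial.coeff_smul,
    Polynomial.coeff_X_pow, smul_eq_mul] at hc
  rw [Finset.sum_eq_single k (fun j hj hjk => by
        simp only [Finset.mem_Icc] at hj
        rw [if_neg (by omega), mul_zero])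
      (fun hnk => absurd (Finset.mem_Icc.mpr hk) hnk),
      Finset.sum_eq_single k (fun j hj hjk => by
        simp only [Finset.mem_Icc] at hj
        rw [if_neg (by omega), mul_zero])
      (fun hnk => absurd (Finset.mem_Icc.mpr hk) hnk)] at hc
  simpa using hc

private lemma prod_reflect {F : Type*} [Field F] (f : ℕ → F) (k : ℕ) :
    ∏ j ∈ Finset.range k, f (k - j) = ∏ j ∈ Finset.Icc 1 k, f j := by
  apply Finset.prod_nbij' (fun j => k - j) (fun i => k - i) <;>
    intros a ha <;> simp_all [Finset.mem_range, Finset.mem_Icc] <;> omega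

/-- every degree-lowering-by-one operator Q has the form
Qxⁿ = Σ_{k=1}^n b_{n,k} x^{n−k} with b_{n,1} ≠ 0; and (with b₁,₁ = 1) there
exist a unique admissible sequence (given by n_ψ, with n_ψ = b_{n,1}) and
unique coefficients q_k (q₁ = 1) with Q = ∂_ψ + Σ_{k≥2} q_k ∂_ψᵏ iff
b_{n,k} = (n choose k)_ψ b_{k,k}. -/
theorem observation_2_1 {F : Type*} [Field F] [CharZero F]
    (Q : Module.End F (Polynomial F))
    (hQdeg : (∀ p : Polynomial F, 1 ≤ p.natDegree →
        Q p ≠ 0 ∧ (Q p).natDegree = p.natDegree - 1) ∧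
      ∀ p : Polynomial F, p.natDegree = 0 → Q p = 0)
    (b : ℕ → ℕ → F)
    (hb : ∀ n : ℕ, Q (X ^ n) = ∑ k ∈ Finset.Icc 1 n, b n k • X ^ (n - k))
    (hb1 : ∀ n ≥ 1, b n 1 ≠ 0) (hnorm : b 1 1 = 1) :
    (∃ b' : ℕ → ℕ → F,
        (∀ n : ℕ, Q (X ^ n) = ∑ k ∈ Finset.Icc 1 n, b' n k • X ^ (n - k)) ∧
        ∀ n ≥ 1, b' n 1 ≠ 0) ∧
    ((∃! nq : (ℕ → F) × (ℕ → F),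
        nq.1 0 = 0 ∧ (∀ n ≥ 1, nq.1 n ≠ 0) ∧ nq.2 0 = 0 ∧ nq.2 1 = 1 ∧
        ∀ n : ℕ, Q (X ^ n) =
          ∑ k ∈ Finset.Icc 1 n,
            (nq.2 k * ∏ j ∈ Finset.range k, nq.1 (n - j)) • X ^ (n - k)) ↔
      (∀ n k : ℕ, 1 ≤ k → k ≤ n →
        b n k = (∏ j ∈ Finset.range k, b (n - j) 1) /
            (∏ j ∈ Finset.Icc 1 k, b j 1) * b k k)) := by
  -- extraction principle: any representation of Q(X^n) in the monomial basis
  -- determines its coefficients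
  have extract : ∀ (c : ℕ → ℕ → F),
      (∀ n : ℕ, Q (X ^ n) = ∑ k ∈ Finset.Icc 1 n, c n k • X ^ (n - k)) →
      ∀ n k : ℕ, 1 ≤ k → k ≤ n → b n k = c n k := by
    intro c hc n k h1 h2
    exact sum_mono_inj n (b n) (c n) ((hb n).symm.trans (hc n)) k
      (Finset.mem_Icc.mpr ⟨h1, h2⟩)
  have hD : ∀ k : ℕ, (∏ j ∈ Finset.Icc 1 k, b j 1) ≠ 0 := by
    intro k
    apply Finset.prod_ne_zero_iff.mpr
    intro j hj
    exact hb1 j (Finset.mem_Icc.mp hj).1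
  constructor
  · exact ⟨b, hb, hb1⟩
  constructor
  · rintro ⟨⟨nψ, q⟩, ⟨h0, hne, hq0, hq1, hQ⟩, -⟩
    have hq1' : q 1 = 1 := hq1
    have key : ∀ n k : ℕ, 1 ≤ k → k ≤ n →
        b n k = q k * ∏ j ∈ Finset.range k, nψ (n - j) := extract _ hQ
    have hn1 : ∀ n, 1 ≤ n → nψ n = b n 1 := by
      intro n hn
      have := key n 1 le_rfl hn
      simpa [hq1'] using this.symm
    intro n k h1 h2
    have hbnk := key n k h1 h2
    have hbkk := key k k h1 le_rfl
    have hprod : ∏ j ∈ Finset.range k, nψ (k - j) = ∏ j ∈ Finset.Icc 1 k, b j 1 := by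
      rw [prod_reflect]
      exact Finset.prod_congr rfl fun j hj => hn1 j (Finset.mem_Icc.mp hj).1
    have hprodn : ∏ j ∈ Finset.range k, nψ (n - j) =
        ∏ j ∈ Finset.range k, b (n - j) 1 := by
      apply Finset.prod_congr rfl
      intro j hj
      simp only [Finset.mem_range] at hj
      exact hn1 (n - j) (by omega)
    rw [hbnk, hbkk, hprod, hprodn.symm]
    field_simp [hD k]
  · intro hcond
    set nψ : ℕ → F := fun n => if n = 0 then 0 else b n 1 with hnψ
    set q : ℕ → F := fun k => if k = 0 then 0 else
      b k k / ∏ j ∈ Finset.Icc 1 k, b j 1 with hq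
    have hnψ' : ∀ n, 1 ≤ n → nψ n = b n 1 := by
      intro n hn; simp [hnψ, Nat.one_le_iff_ne_zero.mp hn]
    have hq' : ∀ k, 1 ≤ k → q k = b k k / ∏ j ∈ Finset.Icc 1 k, b j 1 := by
      intro k hk; simp [hq, Nat.one_le_iff_ne_zero.mp hk]
    have hexp : ∀ n : ℕ, Q (X ^ n) =
        ∑ k ∈ Finset.Icc 1 n,
          (q k * ∏ j ∈ Finset.range k, nψ (n - j)) • X ^ (n - k) := by
      intro n
      rw [hb n]
      apply Finset.sum_congr rfl
      intro k hk
      obtain ⟨h1, h2⟩ := Finset.mem_Icc.mp hk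
      have hprodn : ∏ j ∈ Finset.range k, nψ (n - j) =
          ∏ j ∈ Finset.range k, b (n - j) 1 := by
        apply Finset.prod_congr rfl
        intro j hj
        simp only [Finset.mem_range] at hj
        exact hnψ' (n - j) (by omega)
      rw [hq' k h1, hprodn, hcond n k h1 h2]
      ring_nf
    refine ⟨(nψ, q), ⟨by simp [hnψ], ?_, by simp [hq], ?_, hexp⟩, ?_⟩
    · intro n hn
      show nψ n ≠ 0
      rw [hnψ' n hn]
      exact hb1 n hn
    · show q 1 = 1
      rw [hq' 1 le_rfl]
      simp [hnorm]
    · rintro ⟨nψ', q'⟩ ⟨h0', hne', hq0', hq1', hQ'⟩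
      have hq1'' : q' 1 = 1 := hq1'
      have key : ∀ n k : ℕ, 1 ≤ k → k ≤ n →
          b n k = q' k * ∏ j ∈ Finset.range k, nψ' (n - j) := extract _ hQ'
      have hn1 : ∀ n, 1 ≤ n → nψ' n = b n 1 := by
        intro n hn
        have := key n 1 le_rfl hn
        simpa [hq1''] using this.symm
      have hqeq : ∀ k, 1 ≤ k → q' k = b k k / ∏ j ∈ Finset.Icc 1 k, b j 1 := by
        intro k hk
        have hbkk := key k k hk le_rfl
        have hprod : ∏ j ∈ Finset.range k, nψ' (k - j) =
            ∏ j ∈ Finset.Icc 1 k, b j 1 := by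
          rw [prod_reflect]
          exact Finset.prod_congr rfl fun j hj => hn1 j (Finset.mem_Icc.mp hj).1
        rw [hprod] at hbkk
        rw [hbkk]
        exact (mul_div_cancel_right₀ _ (hD k)).symm
      ext n
      · show nψ' n = nψ n
        by_cases hn : n = 0
        · subst hn; rw [show nψ' 0 = 0 from h0']; simp [hnψ]
        · rw [hn1 n (by omega), hnψ' n (by omega)]
      · show q' n = q n
        by_cases hn : n = 0
        · subst hn; rw [show q' 0 = 0 from hq0']; simp [hq]
        · rw [hqeq n (by omega), hq' n (by omega)]
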